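/- Let H be a second countable locally compact topological group acting continuously on a second countable locally compact Hausdorff topological space X. Then there exist a Borel set Y ⊆ X and an open neighborhood V of the identity element of H such that Y meets every orbit (for every x ∈ X there exists h ∈ H with h • x ∈ Y), and Y is V-lacunary: for every y ∈ Y and every v ∈ V, if v • y ∈ Y then v • y = y. -/

import Mathlib

set_option linter.unusedSectionVars false
set_option maxHeartbeats 1000000

open Set Filter Topology TopologicalSpace Metric Pointwise

section OrderAux

variable {X : Type*} [MetricSpace X]

/-- Lexicographic-type order on `X` induced by distances to a fixed sequence of points. -/
def lacLe (q : ℕ → X) (x y : X) : Prop :=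
  x = y ∨ ∃ i, (∀ j, j < i → dist x (q j) = dist y (q j)) ∧ dist x (q i) < dist y (q i)

lemma eq_of_forall_dist_eq {q : ℕ → X} (hq : DenseRange q) {x y : X}
    (h : ∀ i, dist x (q i) = dist y (q i)) : x = y := by
  by_contra hne
  have hpos : 0 < dist x y := dist_pos.2 hne
  obtain ⟨i, hi⟩ := Metric.denseRange_iff.1 hq x (dist x y / 3) (by linarith)
  have h1 : dist x y ≤ dist x (q i) + dist (q i) y := dist_triangle _ _ _
  rw [dist_comm (q i) y, ← h i] at h1
  linarith

lemma lacLe_antisymm {q : ℕ → X} {x y : X}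
    (hxy : lacLe q x y) (hyx : lacLe q y x) : x = y := by
  rcases hxy with rfl | ⟨i, hi, hilt⟩
  · rfl
  rcases hyx with rfl | ⟨i', hi', hilt'⟩
  · rfl
  rcases lt_trichotomy i i' with h | rfl | h
  · exact absurd (hi' i h) (ne_of_gt hilt)
  · exact absurd (hilt.trans hilt') (lt_irrefl _)
  · exact absurd (hi i' h) (ne_of_gt hilt')

/-- Totality: if not `x ≤ y` then `y < x` with a least witness index. -/
lemma lacLt_of_not_lacLe {q : ℕ → X} (hq : DenseRange q) {x y : X}
    (h : ¬ lacLe q x y) :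
    ∃ i, (∀ j, j < i → dist y (q j) = dist x (q j)) ∧ dist y (q i) < dist x (q i) := by
  classical
  have hne : ¬ ∀ i, dist x (q i) = dist y (q i) := by
    intro hall
    exact h (Or.inl (eq_of_forall_dist_eq hq hall))
  push_neg at hne
  obtain ⟨i₀, hi₀⟩ := hne
  have hex : ∃ i, dist x (q i) ≠ dist y (q i) := ⟨i₀, hi₀⟩
  have hi : dist x (q (Nat.find hex)) ≠ dist y (q (Nat.find hex)) := Nat.find_spec hex
  have hmin : ∀ j, j < Nat.find hex → dist x (q j) = dist y (q j) := by
    intro j hj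
    by_contra hne'
    exact absurd (Nat.find_le hne') (not_le.2 hj)
  rcases lt_or_gt_of_ne hi with hlt | hgt
  · exact absurd (Or.inr ⟨Nat.find hex, hmin, hlt⟩) h
  · exact ⟨Nat.find hex, fun j hj => (hmin j hj).symm, hgt⟩

/-- Existence of a `lacLe`-least point of a nonempty compact set. -/
lemma exists_lacMin {q : ℕ → X} (hq : DenseRange q) {T : Set X}
    (hTc : IsCompact T) (hTne : T.Nonempty) :
    ∃ x ∈ T, ∀ y ∈ T, lacLe q x y := by
  classical
  let g : ℕ → Set X := fun n => Nat.rec T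
    (fun i Ti => {y ∈ Ti | dist y (q i) = sInf ((fun z => dist z (q i)) '' Ti)}) n
  have hgsucc : ∀ i, g (i + 1) =
      {y ∈ g i | dist y (q i) = sInf ((fun z => dist z (q i)) '' (g i))} := fun i => rfl
  have key : ∀ i, IsCompact (g i) ∧ (g i).Nonempty := by
    intro i
    induction i with
    | zero => exact ⟨hTc, hTne⟩
    | succ i ih =>
      obtain ⟨hc, hne⟩ := ih
      have hcont : ContinuousOn (fun z => dist z (q i)) (g i) :=
        (continuous_id.dist continuous_const).continuousOn
      obtain ⟨z, hz, hzmin⟩ := hc.exists_isMinOn hne hcont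
      have hinf : dist z (q i) = sInf ((fun z => dist z (q i)) '' (g i)) := by
        have hmem : dist z (q i) ∈ (fun z => dist z (q i)) '' (g i) := ⟨z, hz, rfl⟩
        have hlb : ∀ r ∈ (fun z => dist z (q i)) '' (g i), dist z (q i) ≤ r := by
          rintro r ⟨w, hw, rfl⟩
          exact hzmin hw
        exact (IsLeast.csInf_eq ⟨hmem, hlb⟩).symm
      have hclosed : IsClosed {y : X | dist y (q i) = sInf ((fun z => dist z (q i)) '' (g i))} :=
        isClosed_eq (continuous_id.dist continuous_const) continuous_const
      refine ⟨?_, ?_⟩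
      · rw [hgsucc i]
        exact hc.inter_right hclosed
      · refine ⟨z, ?_⟩
        rw [hgsucc i]
        exact ⟨hz, hinf⟩
  have hsub : ∀ i, g (i + 1) ⊆ g i := by
    intro i
    rw [hgsucc i]
    exact fun y hy => hy.1
  have hne : (⋂ i, g i).Nonempty := by
    refine IsCompact.nonempty_iInter_of_sequence_nonempty_isCompact_isClosed g hsub
      (fun i => (key i).2) (key 0).1 (fun i => (key i).1.isClosed)
  obtain ⟨x, hx⟩ := hne
  have hxmem : ∀ i, x ∈ g i := fun i => mem_iInter.1 hx i
  refine ⟨x, hxmem 0, ?_⟩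
  intro y hy
  by_cases hall : ∀ i, dist x (q i) = dist y (q i)
  · exact Or.inl (eq_of_forall_dist_eq hq hall)
  · push_neg at hall
    obtain ⟨i₀, hi₀⟩ := hall
    have hex : ∃ i, dist x (q i) ≠ dist y (q i) := ⟨i₀, hi₀⟩
    set i := Nat.find hex with hidef
    have hprefix : ∀ j, j < i → dist x (q j) = dist y (q j) := by
      intro j hj
      by_contra hne'
      exact absurd (Nat.find_le hne') (not_le.2 hj)
    have hyg : ∀ j, j ≤ i → y ∈ g j := by
      intro j hj
      induction j with
      | zero => exact hy
      | succ j ih =>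
        have hj' : j < i := Nat.lt_of_succ_le hj
        have hyj : y ∈ g j := ih (le_of_lt hj')
        have hxj1 : x ∈ g (j + 1) := hxmem (j + 1)
        rw [hgsucc j] at hxj1 ⊢
        refine ⟨hyj, ?_⟩
        rw [← hprefix j hj', hxj1.2]
    have hyi : y ∈ g i := hyg i le_rfl
    have hxi1 : x ∈ g (i + 1) := hxmem (i + 1)
    rw [hgsucc i] at hxi1
    have hle : dist x (q i) ≤ dist y (q i) := by
      rw [hxi1.2]
      refine csInf_le ⟨0, ?_⟩ ⟨y, hyi, rfl⟩
      rintro r ⟨w, _, rfl⟩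
      exact dist_nonneg
    have : dist x (q i) < dist y (q i) := lt_of_le_of_ne hle (Nat.find_spec hex)
    exact Or.inr ⟨i, hprefix, this⟩

end OrderAux

section ProjAux

variable {H X : Type*} [TopologicalSpace H] [Group H] [IsTopologicalGroup H]
  [TopologicalSpace X] [T2Space X] [MulAction H X] [ContinuousSMul H X]

/-- Projection to `X` of a closed subset of `↥Q × X` with `Q` compact is closed. -/
lemma isClosed_proj_of_isCompact {Q : Set H} (hQ : IsCompact Q)
    {P : Set (↥Q × X)} (hP : IsClosed P) : IsClosed (Prod.snd '' P) := by
  have : CompactSpace ↥Q := isCompact_iff_compactSpace.mp hQ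
  exact isClosedMap_snd_of_compactSpace _ hP

/-- The saturation `{y | ∃ g ∈ Q, g⁻¹ • y ∈ S}` of a closed set by a compact set is closed. -/
lemma isClosed_satPiece {Q : Set H} (hQ : IsCompact Q) {S : Set X} (hS : IsClosed S) :
    IsClosed {y : X | ∃ g ∈ Q, g⁻¹ • y ∈ S} := by
  have hcont : Continuous fun p : ↥Q × X => ((p.1 : H))⁻¹ • p.2 :=
    ((continuous_subtype_val.comp continuous_fst).inv).smul continuous_snd
  have hP : IsClosed {p : ↥Q × X | ((p.1 : H))⁻¹ • p.2 ∈ S} := hS.preimage hcont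
  have himg : Prod.snd '' {p : ↥Q × X | ((p.1 : H))⁻¹ • p.2 ∈ S}
      = {y : X | ∃ g ∈ Q, g⁻¹ • y ∈ S} := by
    ext y
    constructor
    · rintro ⟨⟨⟨g, hg⟩, y'⟩, hmem, rfl⟩
      exact ⟨g, hg, hmem⟩
    · rintro ⟨g, hg, hmem⟩
      exact ⟨(⟨g, hg⟩, y), hmem, rfl⟩
  rw [← himg]
  exact isClosed_proj_of_isCompact hQ hP

/-- `{x | ∃ k ∈ K, k • x = l • x}` is closed for compact `K`. -/
lemma isClosed_windowRel {K : Set H} (hK : IsCompact K) (l : H) :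
    IsClosed {x : X | ∃ k ∈ K, k • x = l • x} := by
  have hP : IsClosed {p : ↥K × X | ((p.1 : H)) • p.2 = l • p.2} :=
    isClosed_eq ((continuous_subtype_val.comp continuous_fst).smul continuous_snd)
      (continuous_snd.const_smul l)
  have himg : Prod.snd '' {p : ↥K × X | ((p.1 : H)) • p.2 = l • p.2}
      = {x : X | ∃ k ∈ K, k • x = l • x} := by
    ext x
    constructor
    · rintro ⟨⟨⟨k, hk⟩, x'⟩, hmem, rfl⟩
      exact ⟨k, hk, hmem⟩
    · rintro ⟨k, hk, hmem⟩
      exact ⟨(⟨k, hk⟩, x), hmem, rfl⟩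
  rw [← himg]
  exact isClosed_proj_of_isCompact hK hP

end ProjAux

section EpsAux

variable {H X : Type*} [TopologicalSpace H] [Group H] [IsTopologicalGroup H]
  [MetricSpace X] [MulAction H X] [ContinuousSMul H X]

/-- Points of `L • x` outside the `K`-window are uniformly far from `x`. -/
lemma exists_eps_sep {W K L : Set H} (hWopen : IsOpen W) (hW1 : (1 : H) ∈ W)
    (hWK : W ⊆ K) (hLcomp : IsCompact L) (x : X) :
    ∃ ε : ℝ, 0 < ε ∧ ∀ l ∈ L, (∃ k ∈ K, k • x = l • x) ∨ ε ≤ dist x (l • x) := by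
  by_contra hcon
  push_neg at hcon
  have hstep : ∀ m : ℕ, ∃ l, l ∈ L ∧ (∀ k ∈ K, k • x ≠ l • x) ∧
      dist x (l • x) < 1 / (m + 1) := by
    intro m
    obtain ⟨l, hlL, hlk, hld⟩ := hcon (1 / (m + 1)) (by positivity)
    exact ⟨l, hlL, hlk, hld⟩
  choose l hlL hlK hld using hstep
  set F : Filter H := Filter.map l Filter.atTop with hF
  have hFne : F.NeBot := Filter.map_neBot
  have hFL : F ≤ Filter.principal L := by
    rw [hF, Filter.le_principal_iff, Filter.mem_map]
    exact Filter.Eventually.of_forall hlL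
  obtain ⟨lstar, hlstarL, hcluster⟩ := hLcomp.exists_clusterPt hFL
  have htend : Filter.Tendsto (fun m => l m • x) Filter.atTop (𝓝 x) := by
    rw [tendsto_iff_dist_tendsto_zero]
    have h0 : Filter.Tendsto (fun m : ℕ => 1 / ((m : ℝ) + 1)) Filter.atTop (𝓝 0) :=
      tendsto_one_div_add_atTop_nhds_zero_nat
    refine squeeze_zero (fun m => dist_nonneg) (fun m => ?_) h0
    rw [dist_comm]
    exact le_of_lt (hld m)
  have hφ : Continuous fun h : H => h • x := continuous_id.smul continuous_const
  have hcl2 : ClusterPt (lstar • x) (Filter.map (fun h : H => h • x) F) :=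
    hcluster.map hφ.continuousAt (Filter.tendsto_map)
  have hmapeq : Filter.map (fun h : H => h • x) F
      = Filter.map (fun m => l m • x) Filter.atTop := by
    rw [hF, Filter.map_map]
    rfl
  have hfix : lstar • x = x := by
    refine eq_of_nhds_neBot ?_
    have h1 : NeBot (𝓝 (lstar • x) ⊓ Filter.map (fun h : H => h • x) F) := hcl2
    rw [hmapeq] at h1
    exact h1.mono (inf_le_inf_left _ htend)
  have hNopen : IsOpen (W * {lstar}) := hWopen.mul_right
  have hNmem : lstar ∈ W * {lstar} := ⟨1, hW1, lstar, rfl, one_mul _⟩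
  have hNnhds : W * {lstar} ∈ 𝓝 lstar := hNopen.mem_nhds hNmem
  have hrange : Set.range l ∈ F := by
    rw [hF, Filter.mem_map]
    exact Filter.Eventually.of_forall fun m => Set.mem_range_self m
  obtain ⟨y, hyN, hyr⟩ := clusterPt_iff_nonempty.1 hcluster hNnhds hrange
  obtain ⟨m, rfl⟩ := hyr
  obtain ⟨w, hw, z, hz, hwz⟩ := hyN
  rw [Set.mem_singleton_iff] at hz
  subst hz
  refine hlK m w (hWK hw) ?_
  rw [← hwz, mul_smul, hfix]

end EpsAux

/-- Theorem A specialized to a continuous action of a second countable locally compact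
group `H` on a second countable locally compact Hausdorff space `X`: there is a Borel
set `Y ⊆ X` and an open neighborhood `V` of the identity of `H` such that `Y` meets
every orbit and `Y` is `V`-lacunary. -/
theorem stmt_0 {H X : Type*} [TopologicalSpace H] [Group H] [IsTopologicalGroup H]
    [SecondCountableTopology H] [LocallyCompactSpace H]
    [TopologicalSpace X] [SecondCountableTopology X] [LocallyCompactSpace X] [T2Space X]
    [MulAction H X] [ContinuousSMul H X]
    [MeasurableSpace X] [BorelSpace X] :
    ∃ (Y : Set X) (V : Set H), MeasurableSet Y ∧ IsOpen V ∧ (1 : H) ∈ V ∧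
      (∀ x : X, ∃ h : H, h • x ∈ Y) ∧
      (∀ y ∈ Y, ∀ v ∈ V, v • y ∈ Y → v • y = y) := by
  classical
  rcases isEmpty_or_nonempty X with hX | hX
  · exact ⟨∅, Set.univ, MeasurableSet.empty, isOpen_univ, Set.mem_univ _,
      fun x => (IsEmpty.false x).elim, fun y hy => absurd hy (Set.notMem_empty y)⟩
  letI : MetricSpace X := TopologicalSpace.metrizableSpaceMetric X
  obtain ⟨q, hq⟩ := TopologicalSpace.exists_dense_seq X
  -- group scales
  obtain ⟨C, hCcomp, hCnhds⟩ := exists_compact_mem_nhds (1 : H)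
  set W : Set H := interior C ∩ (interior C)⁻¹ with hWdef
  have hintC : (1 : H) ∈ interior C := mem_interior_iff_mem_nhds.2 hCnhds
  have hWopen : IsOpen W := isOpen_interior.inter isOpen_interior.inv
  have hW1 : (1 : H) ∈ W := ⟨hintC, by rw [Set.mem_inv, inv_one]; exact hintC⟩
  have hWsymm : W⁻¹ = W := by
    rw [hWdef, Set.inter_inv, inv_inv]
    exact Set.inter_comm _ _
  set K : Set H := closure W with hKdef
  have hWK : W ⊆ K := subset_closure
  have hK1 : (1 : H) ∈ K := hWK hW1
  have hKclosed : IsClosed K := isClosed_closure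
  have hKsymm : ∀ k ∈ K, k⁻¹ ∈ K := by
    intro k hk
    have h1 : k⁻¹ ∈ K⁻¹ := Set.inv_mem_inv.2 hk
    rwa [hKdef, inv_closure, hWsymm] at h1
  have hWC : W ⊆ C := fun w hw => interior_subset hw.1
  have hCinv : C⁻¹ ∈ 𝓝 (1 : H) := by
    have h1 : (fun g : H => g⁻¹) ⁻¹' C ∈ 𝓝 (1 : H) := by
      apply continuous_inv.continuousAt.preimage_mem_nhds
      rwa [inv_one]
    exact h1
  have hKcomp : IsCompact K := by
    have hclsub : K ⊆ C * C := by
      intro x hx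
      obtain ⟨w, hwmem, hwW⟩ := mem_closure_iff_nhds.1 hx ({x} * C⁻¹)
        (singleton_mul_mem_nhds_of_nhds_one x hCinv)
      obtain ⟨a, ha, b, hb, rfl⟩ := hwmem
      rw [Set.mem_singleton_iff] at ha
      have hbC : b⁻¹ ∈ C := Set.mem_inv.1 hb
      have hxeq : x = (a * b) * b⁻¹ := by rw [ha]; group
      rw [hxeq]
      exact ⟨a * b, hWC hwW, b⁻¹, hbC, rfl⟩
    exact (hCcomp.mul hCcomp).of_isClosed_subset hKclosed hclsub
  set L : Set H := K * K with hLdef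
  have hLcomp : IsCompact L := hKcomp.mul hKcomp
  have hKL : K ⊆ L := by
    intro k hk
    exact ⟨k, hk, 1, hK1, mul_one k⟩
  have hLsymm : ∀ g ∈ L, g⁻¹ ∈ L := by
    rintro g ⟨a, ha, b, hb, rfl⟩
    rw [mul_inv_rev]
    exact ⟨b⁻¹, hKsymm b hb, a⁻¹, hKsymm a ha, rfl⟩
  -- the valley sets
  set S : ℕ → Set X := fun j => {x | ∀ l ∈ L, (∃ k ∈ K, k • x = l • x) ∨
      dist x (q (Nat.unpair j).1) + 1 / ((Nat.unpair j).2 + 1)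
        ≤ dist (l • x) (q (Nat.unpair j).1)} with hSdef
  have hSclosed : ∀ j, IsClosed (S j) := by
    intro j
    have heq : S j = ⋂ l ∈ L, ({x : X | ∃ k ∈ K, k • x = l • x} ∪
        {x : X | dist x (q (Nat.unpair j).1) + 1 / ((Nat.unpair j).2 + 1)
          ≤ dist (l • x) (q (Nat.unpair j).1)}) := by
      ext x
      simp only [hSdef, Set.mem_setOf_eq, Set.mem_iInter, Set.mem_union]
    rw [heq]
    refine isClosed_biInter fun l _ => IsClosed.union (isClosed_windowRel hKcomp l) ?_
    exact isClosed_le ((continuous_id.dist continuous_const).add continuous_const)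
      ((continuous_const_smul l).dist continuous_const)
  -- two points of the same S in the same orbit, L-related, are K-related
  have pairB : ∀ (j : ℕ) (x y : X) (g : H), x ∈ S j → y ∈ S j → g ∈ L → g • x = y →
      ∃ k ∈ K, k • x = y := by
    intro j x y g hxS hyS hgL hgxy
    by_contra hno
    push_neg at hno
    have h1 : dist x (q (Nat.unpair j).1) + 1 / ((Nat.unpair j).2 + 1)
        ≤ dist y (q (Nat.unpair j).1) := by
      rcases hxS g hgL with hk | hineq
      · obtain ⟨k, hkK, hkeq⟩ := hk
        exact absurd (hkeq.trans hgxy) (hno k hkK)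
      · rwa [hgxy] at hineq
    have hginv : g⁻¹ • y = x := by
      rw [← hgxy, inv_smul_smul]
    have h2 : dist y (q (Nat.unpair j).1) + 1 / ((Nat.unpair j).2 + 1)
        ≤ dist x (q (Nat.unpair j).1) := by
      rcases hyS g⁻¹ (hLsymm g hgL) with hk | hineq
      · obtain ⟨k, hkK, hkeq⟩ := hk
        exfalso
        have hky : k • y = x := hkeq.trans hginv
        have : k⁻¹ • x = y := by rw [← hky, inv_smul_smul]
        exact hno k⁻¹ (hKsymm k hkK) this
      · rwa [hginv] at hineq
    have hpos : (0 : ℝ) < 1 / ((Nat.unpair j).2 + 1) := by positivity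
    linarith
  -- every point lies in some S j
  have serve : ∀ x : X, ∃ j, x ∈ S j := by
    intro x
    obtain ⟨ε, hεpos, hεsep⟩ := exists_eps_sep hWopen hW1 hWK hLcomp x
    obtain ⟨i, hqi⟩ := Metric.denseRange_iff.1 hq x (ε / 4) (by linarith)
    obtain ⟨m, hm⟩ := exists_nat_one_div_lt (show (0 : ℝ) < ε / 2 by linarith)
    refine ⟨Nat.pair i m, ?_⟩
    intro l hlL
    rw [Nat.unpair_pair]
    rcases hεsep l hlL with hk | hfar
    · exact Or.inl hk
    · right
      have htri : dist x (l • x) ≤ dist x (q i) + dist (q i) (l • x) := dist_triangle _ _ _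
      have h2 : dist (l • x) (q i) = dist (q i) (l • x) := dist_comm _ _
      have hm' : 1 / ((m : ℝ) + 1) < ε / 2 := hm
      rw [h2]
      linarith
  -- the minimal sets
  set M : ℕ → Set X := fun j => {x | x ∈ S j ∧ ∀ k ∈ K, k • x ∈ S j → lacLe q x (k • x)}
    with hMdef
  -- measurability of M
  have hMmeas : ∀ j, MeasurableSet (M j) := by
    intro j
    set Bad : ℕ → ℕ → Set X := fun i m => Prod.snd ''
      ({p : ↥K × X | ((p.1 : H)) • p.2 ∈ S j} ∩
        ((⋂ (j' : ℕ) (_ : j' < i),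
          {p : ↥K × X | dist (((p.1 : H)) • p.2) (q j') = dist p.2 (q j')}) ∩
        {p : ↥K × X | dist (((p.1 : H)) • p.2) (q i) + 1 / (m + 1) ≤ dist p.2 (q i)}))
      with hBaddef
    have hsmul : Continuous fun p : ↥K × X => ((p.1 : H)) • p.2 :=
      (continuous_subtype_val.comp continuous_fst).smul continuous_snd
    have hBadclosed : ∀ i m, IsClosed (Bad i m) := by
      intro i m
      refine isClosed_proj_of_isCompact hKcomp ?_
      refine IsClosed.inter ((hSclosed j).preimage hsmul) (IsClosed.inter ?_ ?_)
      · refine isClosed_biInter fun j' _ => isClosed_eq ?_ ?_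
        · exact hsmul.dist continuous_const
        · exact continuous_snd.dist continuous_const
      · refine isClosed_le ?_ ?_
        · exact (hsmul.dist continuous_const).add continuous_const
        · exact continuous_snd.dist continuous_const
    have heq : M j = S j \ ⋃ (i : ℕ) (m : ℕ), Bad i m := by
      ext x
      constructor
      · rintro ⟨hxS, hmin⟩
        refine ⟨hxS, ?_⟩
        intro hbad
        obtain ⟨i, hbad⟩ := Set.mem_iUnion.1 hbad
        obtain ⟨m, hbad⟩ := Set.mem_iUnion.1 hbad
        obtain ⟨⟨kk, x'⟩, ⟨hkS, hpremem, hlt⟩, hsnd⟩ := hbad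
        simp only at hsnd
        subst hsnd
        simp only [Set.mem_setOf_eq] at hkS hlt
        have hpre : ∀ j', j' < i →
            dist ((kk : H) • x') (q j') = dist x' (q j') := by
          intro j' hj'
          exact Set.mem_iInter₂.1 hpremem j' hj'
        have hpos : (0 : ℝ) < 1 / ((m : ℝ) + 1) := by positivity
        rcases hmin (kk : H) kk.2 hkS with heq' | ⟨i', hpre', hlt'⟩
        · rw [← heq'] at hlt
          linarith
        · rcases lt_trichotomy i' i with hii | rfl | hii
          · have := hpre i' hii
            linarith
          · linarith
          · have := hpre' i hii
            linarith
      · rintro ⟨hxS, hnotbad⟩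
        refine ⟨hxS, ?_⟩
        intro k hkK hkS
        by_contra hnle
        obtain ⟨i, hpre, hlt⟩ := lacLt_of_not_lacLe hq hnle
        obtain ⟨m, hm⟩ := exists_nat_one_div_lt (show (0 : ℝ) <
          dist x (q i) - dist (k • x) (q i) by linarith)
        refine hnotbad ?_
        refine Set.mem_iUnion.2 ⟨i, Set.mem_iUnion.2 ⟨m, ?_⟩⟩
        refine ⟨(⟨k, hkK⟩, x), ⟨hkS, Set.mem_iInter₂.2 fun j' hj' => hpre j' hj', ?_⟩, rfl⟩
        show dist (k • x) (q i) + 1 / ((m : ℝ) + 1) ≤ dist x (q i)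
        linarith
    rw [heq]
    refine ((hSclosed j).measurableSet).diff ?_
    exact MeasurableSet.iUnion fun i => MeasurableSet.iUnion fun m =>
      (hBadclosed i m).measurableSet
  -- saturations
  set Sat : ℕ → Set X := fun j =>
    ⋃ n : ℕ, {y : X | ∃ g ∈ compactCovering H n, g⁻¹ • y ∈ S j} with hSatdef
  have hSatmeas : ∀ j, MeasurableSet (Sat j) := by
    intro j
    exact MeasurableSet.iUnion fun n =>
      (isClosed_satPiece (isCompact_compactCovering H n) (hSclosed j)).measurableSet
  have hSatorbit : ∀ (j : ℕ) (y : X), y ∈ Sat j ↔ ∃ h : H, h • y ∈ S j := by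
    intro j y
    constructor
    · rintro hy
      obtain ⟨n, hy⟩ := Set.mem_iUnion.1 hy
      obtain ⟨g, _, hgS⟩ := hy
      exact ⟨g⁻¹, hgS⟩
    · rintro ⟨h, hhS⟩
      obtain ⟨n, hn⟩ := exists_mem_compactCovering h⁻¹
      exact Set.mem_iUnion.2 ⟨n, ⟨h⁻¹, hn, by rwa [inv_inv]⟩⟩
  set R : ℕ → Set X := fun j => {x | ∀ j' < j, x ∉ Sat j'} with hRdef
  have hRmeas : ∀ j, MeasurableSet (R j) := by
    intro j
    have heq : R j = ⋂ (j' : ℕ) (_ : j' < j), (Sat j')ᶜ := by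
      ext x
      simp only [hRdef, Set.mem_setOf_eq, Set.mem_iInter, Set.mem_compl_iff]
    rw [heq]
    exact MeasurableSet.iInter fun j' => MeasurableSet.iInter fun _ =>
      (hSatmeas j').compl
  refine ⟨⋃ j, R j ∩ M j, W, ?_, hWopen, hW1, ?_, ?_⟩
  · exact MeasurableSet.iUnion fun j => (hRmeas j).inter (hMmeas j)
  · -- completeness
    intro x
    have hex : ∃ j, ∃ h : H, h • x ∈ S j := by
      obtain ⟨j, hj⟩ := serve x
      exact ⟨j, 1, by rwa [one_smul]⟩
    obtain ⟨h₀, hh₀⟩ := Nat.find_spec hex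
    set j₀ := Nat.find hex with hj₀def
    set x₀ : X := h₀ • x with hx₀def
    set T : Set X := {y | y ∈ S j₀ ∧ ∃ k ∈ K, k • x₀ = y} with hTdef
    have hTcomp : IsCompact T := by
      have himg : IsCompact ((fun k : H => k • x₀) '' K) :=
        hKcomp.image (continuous_id.smul continuous_const)
      have heq : T = S j₀ ∩ (fun k : H => k • x₀) '' K := by
        ext y
        simp only [hTdef, Set.mem_setOf_eq, Set.mem_inter_iff, Set.mem_image]
      rw [heq]
      exact himg.inter_left (hSclosed j₀)
    have hTne : T.Nonempty := ⟨x₀, hh₀, 1, hK1, one_smul _ _⟩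
    obtain ⟨xs, hxsT, hxsmin⟩ := exists_lacMin hq hTcomp hTne
    obtain ⟨hxsS, k₀, hk₀K, hk₀⟩ := hxsT
    have hxsM : xs ∈ M j₀ := by
      refine ⟨hxsS, ?_⟩
      intro k hkK hkS
      have hgL : k * k₀ ∈ L := Set.mul_mem_mul hkK hk₀K
      have hgeq : (k * k₀) • x₀ = k • xs := by rw [mul_smul, hk₀]
      obtain ⟨k', hk'K, hk'eq⟩ := pairB j₀ x₀ (k • xs) (k * k₀) hh₀ hkS hgL hgeq
      exact hxsmin (k • xs) ⟨hkS, k', hk'K, hk'eq⟩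
    have hxsR : xs ∈ R j₀ := by
      intro j' hj' hmem
      rw [hSatorbit j' xs] at hmem
      obtain ⟨g, hgS⟩ := hmem
      have : (g * (k₀ * h₀)) • x ∈ S j' := by
        rw [mul_smul, mul_smul, ← hx₀def, hk₀]
        exact hgS
      exact absurd (Nat.find_le ⟨g * (k₀ * h₀), this⟩) (not_le.2 hj')
    refine ⟨k₀ * h₀, ?_⟩
    refine Set.mem_iUnion.2 ⟨j₀, ?_⟩
    have : (k₀ * h₀) • x = xs := by rw [mul_smul, ← hx₀def, hk₀]
    rw [this]
    exact ⟨hxsR, hxsM⟩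
  · -- lacunarity
    intro y hy v hv hvy
    obtain ⟨j₁, hy1⟩ := Set.mem_iUnion.1 hy
    obtain ⟨hyR, hyM⟩ := hy1
    obtain ⟨j₂, hz1⟩ := Set.mem_iUnion.1 hvy
    obtain ⟨hzR, hzM⟩ := hz1
    have hj21 : ¬ j₂ < j₁ := by
      intro hlt
      refine hyR j₂ hlt ?_
      rw [hSatorbit j₂ y]
      exact ⟨v, hzM.1⟩
    have hj12 : ¬ j₁ < j₂ := by
      intro hlt
      refine hzR j₁ hlt ?_
      rw [hSatorbit j₁ (v • y)]
      refine ⟨v⁻¹, ?_⟩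
      rw [inv_smul_smul]
      exact hyM.1
    have hjeq : j₁ = j₂ := by omega
    subst hjeq
    have h1 : lacLe q y (v • y) := hyM.2 v (hWK hv) hzM.1
    have h2 : lacLe q (v • y) y := by
      have hvinv : v⁻¹ ∈ K := hKsymm v (hWK hv)
      have h3 : v⁻¹ • (v • y) ∈ S j₁ := by
        rw [inv_smul_smul]
        exact hyM.1
      have := hzM.2 v⁻¹ hvinv h3
      rwa [inv_smul_smul] at this
    exact lacLe_antisymm h2 h1
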